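/- Let α > 0 and p0 ∈ (0,1). Define 𝓕₀(η, x1, α, p0) = ∫₁^(1/x1) σ^(1−p0) · G(σ, α, η) dσ. Then for all η ∈ [0, 2α] and x1 ∈ (0, 1/2]: 𝓕₀(0, 1/2, α, p0) − 𝓕₀(η, x1, α, p0) ≤ (η²/2) · ∫₁^∞ σ^(1−p0) / (σ²·(σ² + η²)) dσ. -/

import Mathlib

open Set MeasureTheory

/-- Difference estimate for `𝓕₀`: for `η ∈ [0,2α]` and `x1 ∈ (0,1/2]`,
`𝓕₀(0,1/2) − 𝓕₀(η,x1) ≤ (η²/2)·∫₁^∞ σ^(1−p0)/(σ²(σ²+η²)) dσ`. -/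
theorem stmt_6 (α p0 : ℝ) (hα : 0 < α) (hp0 : p0 ∈ Set.Ioo (0 : ℝ) 1)
    (F0 : ℝ → ℝ → ℝ)
    (hF0 : ∀ η x1, F0 η x1 = ∫ σ in (1 : ℝ)..(1 / x1),
      σ ^ (1 - p0) *
        ((1/2 : ℝ) * (1 / (σ ^ 2 + η ^ 2) - 1 / (σ ^ 2 + (α * (σ - 1) + η) ^ 2)))) :
    ∀ η ∈ Set.Icc (0 : ℝ) (2 * α), ∀ x1 ∈ Set.Ioc (0 : ℝ) (1/2),
      F0 0 (1/2) - F0 η x1 ≤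
        (η ^ 2 / 2) * ∫ σ in Set.Ioi (1 : ℝ), σ ^ (1 - p0) / (σ ^ 2 * (σ ^ 2 + η ^ 2)) := by
  intro η hη x1 hx1
  obtain ⟨hη0, -⟩ := hη
  obtain ⟨hx0, hxh⟩ := hx1
  have hp1 : p0 < 1 := hp0.2
  have hp00 : 0 < p0 := hp0.1
  have hx2 : (2:ℝ) ≤ 1 / x1 := by
    rw [le_div_iff₀ hx0]; linarith
  set K : ℝ → ℝ → ℝ := fun e σ => σ ^ (1 - p0) *
      ((1/2 : ℝ) * (1 / (σ ^ 2 + e ^ 2) - 1 / (σ ^ 2 + (α * (σ - 1) + e) ^ 2))) with hK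
  set h : ℝ → ℝ := fun σ => σ ^ (1 - p0) / (σ ^ 2 * (σ ^ 2 + η ^ 2)) with hh
  have hF0' : ∀ e x, F0 e x = ∫ σ in (1:ℝ)..(1/x), K e σ := by
    intro e x; rw [hF0]
  -- denominators positive
  have hden1 : ∀ e σ : ℝ, 1 ≤ σ → (0:ℝ) < σ ^ 2 + e ^ 2 := by
    intro e σ hσ; nlinarith [sq_nonneg e]
  have hden2 : ∀ e σ : ℝ, 1 ≤ σ → (0:ℝ) < σ ^ 2 + (α * (σ - 1) + e) ^ 2 := by
    intro e σ hσ; nlinarith [sq_nonneg (α * (σ - 1) + e)]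
  -- continuity of K e on Ici 1
  have hcont : ∀ e : ℝ, ContinuousOn (K e) (Ici 1) := by
    intro e
    apply ContinuousOn.mul
    · exact continuousOn_id.rpow_const fun x _ => Or.inr (by linarith)
    · apply ContinuousOn.mul continuousOn_const
      apply ContinuousOn.sub
      · exact continuousOn_const.div
          (((continuous_pow 2).add continuous_const).continuousOn)
          (fun x hx => ne_of_gt (hden1 e x hx))
      · exact continuousOn_const.div
          (((continuous_pow 2).add ((((continuous_const.mul
            (continuous_id.sub continuous_const)).add continuous_const).pow 2))).continuousOn)
          (fun x hx => ne_of_gt (hden2 e x hx))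
  have hconth : ContinuousOn h (Ici 1) := by
    apply ContinuousOn.div
    · exact continuousOn_id.rpow_const fun x _ => Or.inr (by linarith)
    · exact ((continuous_pow 2).mul ((continuous_pow 2).add continuous_const)).continuousOn
    · intro x hx
      have hx1 : (1:ℝ) ≤ x := hx
      have := hden1 η x hx1
      have hx2' : (0:ℝ) < x ^ 2 := by nlinarith
      positivity
  -- nonnegativity of K e for e ≥ 0, σ ≥ 1
  have hKnn : ∀ e σ : ℝ, 0 ≤ e → 1 ≤ σ → 0 ≤ K e σ := by
    intro e σ he hσ
    apply mul_nonneg (Real.rpow_nonneg (by linarith) _)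
    have h1 : σ ^ 2 + e ^ 2 ≤ σ ^ 2 + (α * (σ - 1) + e) ^ 2 := by
      nlinarith [sq_nonneg (α * (σ - 1)),
        mul_nonneg (mul_nonneg hα.le (by linarith : (0:ℝ) ≤ σ - 1)) he]
    have := one_div_le_one_div_of_le (hden1 e σ hσ) h1
    linarith
  have hnnh : ∀ σ : ℝ, 1 ≤ σ → 0 ≤ h σ := by
    intro σ hσ
    have h1 := hden1 η σ hσ
    have h2 : (0:ℝ) < σ ^ 2 := by nlinarith
    exact div_nonneg (Real.rpow_nonneg (by linarith) _) (by positivity)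
  -- interval integrability
  have hI : ∀ e : ℝ, ∀ a b : ℝ, 1 ≤ a → a ≤ b → IntervalIntegrable (K e) volume a b := by
    intro e a b ha hab
    apply ContinuousOn.intervalIntegrable
    apply (hcont e).mono
    rw [uIcc_of_le hab]
    exact fun x hx => le_trans ha hx.1
  have hIh : IntervalIntegrable (fun σ => η ^ 2 / 2 * h σ) volume 1 2 := by
    apply ContinuousOn.intervalIntegrable
    apply (continuousOn_const.mul hconth).mono
    rw [uIcc_of_le (by norm_num : (1:ℝ) ≤ 2)]
    exact fun x hx => hx.1
  -- pointwise bound on [1,2]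
  have hpt : ∀ σ ∈ Icc (1:ℝ) 2, K 0 σ - K η σ ≤ η ^ 2 / 2 * h σ := by
    intro σ hσ
    obtain ⟨h1σ, -⟩ := hσ
    have hσ0 : (0:ℝ) < σ := by linarith
    have hd0 : (0:ℝ) < σ ^ 2 := by positivity
    have hdη : (0:ℝ) < σ ^ 2 + η ^ 2 := hden1 η σ h1σ
    have hA : 0 ≤ α * (σ - 1) := mul_nonneg hα.le (by linarith)
    have e1 : 1 / σ ^ 2 - 1 / (σ ^ 2 + η ^ 2) = η ^ 2 / (σ ^ 2 * (σ ^ 2 + η ^ 2)) := by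
      field_simp
      ring
    have e2 : 1 / (σ ^ 2 + (α * (σ - 1) + η) ^ 2) ≤ 1 / (σ ^ 2 + (α * (σ - 1) + 0) ^ 2) := by
      apply one_div_le_one_div_of_le (hden2 0 σ h1σ)
      nlinarith [sq_nonneg (α * (σ - 1)), mul_nonneg hA hη0]
    have key : (1/2 : ℝ) * (1 / (σ ^ 2 + 0 ^ 2) - 1 / (σ ^ 2 + (α * (σ - 1) + 0) ^ 2))
        - (1/2 : ℝ) * (1 / (σ ^ 2 + η ^ 2) - 1 / (σ ^ 2 + (α * (σ - 1) + η) ^ 2))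
        ≤ (1/2 : ℝ) * (η ^ 2 / (σ ^ 2 * (σ ^ 2 + η ^ 2))) := by
      have hz : σ ^ 2 + 0 ^ 2 = σ ^ 2 := by ring
      rw [hz]
      linarith
    have hr : 0 ≤ σ ^ (1 - p0) := Real.rpow_nonneg hσ0.le _
    have := mul_le_mul_of_nonneg_left key hr
    simp only [hK, hh]
    calc σ ^ (1 - p0) * ((1/2 : ℝ) * (1 / (σ ^ 2 + 0 ^ 2) - 1 / (σ ^ 2 + (α * (σ - 1) + 0) ^ 2)))
          - σ ^ (1 - p0) * ((1/2 : ℝ) * (1 / (σ ^ 2 + η ^ 2) - 1 / (σ ^ 2 + (α * (σ - 1) + η) ^ 2)))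
        ≤ σ ^ (1 - p0) * ((1/2 : ℝ) * (η ^ 2 / (σ ^ 2 * (σ ^ 2 + η ^ 2)))) := by
          rw [← mul_sub]; exact this
      _ = η ^ 2 / 2 * (σ ^ (1 - p0) / (σ ^ 2 * (σ ^ 2 + η ^ 2))) := by ring
  -- integrability on Ioi 1
  have hint : IntegrableOn h (Ioi 1) volume := by
    have hg : IntegrableOn (fun σ : ℝ => σ ^ (1 - p0 - 4)) (Ioi 1) volume := by
      rw [integrableOn_Ioi_rpow_iff one_pos]; linarith
    apply Integrable.mono' hg
    · exact (hconth.mono (fun x hx => le_of_lt hx)).aestronglyMeasurable measurableSet_Ioi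
    · filter_upwards [ae_restrict_mem measurableSet_Ioi] with σ hσ
      have h1σ : (1:ℝ) ≤ σ := le_of_lt hσ
      have hσ0 : (0:ℝ) < σ := by linarith
      rw [Real.norm_of_nonneg (hnnh σ h1σ)]
      have hd : (σ:ℝ) ^ 4 ≤ σ ^ 2 * (σ ^ 2 + η ^ 2) := by nlinarith [sq_nonneg η, sq_nonneg σ]
      have h4 : (0:ℝ) < (σ:ℝ) ^ 4 := by positivity
      have step : h σ ≤ σ ^ (1 - p0) / σ ^ 4 := by
        simp only [hh]
        exact div_le_div_of_nonneg_left (Real.rpow_nonneg hσ0.le _) h4 hd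
      have : σ ^ (1 - p0) / σ ^ 4 = σ ^ (1 - p0 - 4) := by
        rw [← Real.rpow_natCast σ 4, ← Real.rpow_sub hσ0]
        norm_num
      linarith [step, this.le, this.ge]
  have hnnI : 0 ≤ᵐ[volume.restrict (Ioi (1:ℝ))] h := by
    filter_upwards [ae_restrict_mem measurableSet_Ioi] with σ hσ
    exact hnnh σ (le_of_lt hσ)
  -- assemble
  have step1 : F0 0 (1/2) = ∫ σ in (1:ℝ)..2, K 0 σ := by
    rw [hF0']; norm_num
  have step2 : (∫ σ in (1:ℝ)..2, K η σ) ≤ F0 η x1 := by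
    rw [hF0' η x1,
      ← intervalIntegral.integral_add_adjacent_intervals
        (hI η 1 2 le_rfl (by norm_num)) (hI η 2 (1/x1) (by norm_num) hx2)]
    have : 0 ≤ ∫ σ in (2:ℝ)..(1/x1), K η σ :=
      intervalIntegral.integral_nonneg hx2 (fun σ hσ => hKnn η σ hη0 (by linarith [hσ.1]))
    linarith
  have step3 : (∫ σ in (1:ℝ)..2, K 0 σ) - (∫ σ in (1:ℝ)..2, K η σ)
      ≤ ∫ σ in (1:ℝ)..2, η ^ 2 / 2 * h σ := by
    rw [← intervalIntegral.integral_sub (hI 0 1 2 le_rfl (by norm_num))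
      (hI η 1 2 le_rfl (by norm_num))]
    exact intervalIntegral.integral_mono_on (by norm_num)
      ((hI 0 1 2 le_rfl (by norm_num)).sub (hI η 1 2 le_rfl (by norm_num))) hIh hpt
  have step4 : (∫ σ in (1:ℝ)..2, η ^ 2 / 2 * h σ) = η ^ 2 / 2 * ∫ σ in Ioc (1:ℝ) 2, h σ := by
    rw [intervalIntegral.integral_const_mul, intervalIntegral.integral_of_le (by norm_num)]
  have step5 : (∫ σ in Ioc (1:ℝ) 2, h σ) ≤ ∫ σ in Ioi (1:ℝ), h σ :=
    setIntegral_mono_set hint hnnI Ioc_subset_Ioi_self.eventuallyLE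
  have step6 : η ^ 2 / 2 * (∫ σ in Ioc (1:ℝ) 2, h σ) ≤ η ^ 2 / 2 * ∫ σ in Ioi (1:ℝ), h σ :=
    mul_le_mul_of_nonneg_left step5 (by positivity)
  calc F0 0 (1/2) - F0 η x1 ≤ (∫ σ in (1:ℝ)..2, K 0 σ) - (∫ σ in (1:ℝ)..2, K η σ) := by
        rw [step1]; linarith
    _ ≤ ∫ σ in (1:ℝ)..2, η ^ 2 / 2 * h σ := step3
    _ = η ^ 2 / 2 * ∫ σ in Ioc (1:ℝ) 2, h σ := step4
    _ ≤ η ^ 2 / 2 * ∫ σ in Ioi (1:ℝ), h σ := step6
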